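/- Let (X,‖·‖) be a reflexive Banach space with dual (X*,‖·‖_*), let L > 0, σ > 0, N ≥ 1, let {a_{k,i}}_{0≤i<k≤N} and {b_{k,i}}_{0≤i≤k≤N} be real coefficients with b_{0,0} = −1, let u_0 ≤ … ≤ u_N be positive reals, and set v_i = 1/u_{N−i}. Let U and V be defined as follows: U(A_0,…,A_N, B_0,…,B_N) = Σ_{k=0}^{N−1} (u_k/(2L)) ‖A_k − A_{k+1}‖_*² + Σ_{k=0}^{N−1} (σ/2) ‖B_k − B_{k+1}‖² + Σ_{k=0}^{N−1} ⟨Σ_{i=0}^{k} a_{k+1,i} A_i, B_{k+1}⟩ − Σ_{k=0}^{N} u_k ⟨A_k − A_{k+1}, x_k⟩, where A_{N+1} := 0, x_0 := B_0, x_{k+1} := x_k − Σ_{i=0}^{k+1} b_{k+1,i} B_i; and V(C_0,…,C_N, D_0,…,D_N) = Σ_{k=0}^{N−1} (v_{k+1}/(2L)) ‖C_k − C_{k+1}‖_*² + Σ_{k=0}^{N−1} (σ/2) ‖D_k − D_{k+1}‖² + Σ_{k=0}^{N} ⟨Σ_{i=0}^{k} b_{N−i,N−k} C_i, D_k⟩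 + Σ_{k=0}^{N−1} ⟨v_{k+1} C_{k+1} − Σ_{j=0}^{k} (v_{j+1} − v_j) C_j, Σ_{i=0}^{k} a_{N−i,N−1−k} D_i⟩. For any A_0,…,A_N ∈ X* and B_0,…,B_N ∈ X, define C_0,…,C_N ∈ X* and D_0,…,D_N ∈ X by C_0 = u_N A_N, C_{N−i} − C_{N−i−1} = u_i (A_i − A_{i+1}) for i = 0, …, N−1 (with A_{N+1} := 0), and D_i = B_{N−i} for i = 0, …, N. Then U(A_0,…,A_N, B_0,…,B_N) = V(C_0,…,C_N, D_0,…,D_N). -/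

import Mathlib

open NormedSpace Finset

private theorem tri_reflect {M : Type*} [AddCommMonoid M] (n : ℕ) (f : ℕ → ℕ → M) :
    ∑ k ∈ Finset.range n, ∑ i ∈ Finset.range (k + 1), f k i
      = ∑ k ∈ Finset.range n, ∑ i ∈ Finset.range (k + 1), f (n - 1 - i) (n - 1 - k) := by
  rw [Finset.sum_sigma', Finset.sum_sigma']
  refine Finset.sum_nbij'
    (fun p : (Σ _ : ℕ, ℕ) => (⟨n - 1 - p.2, n - 1 - p.1⟩ : Σ _ : ℕ, ℕ))
    (fun p : (Σ _ : ℕ, ℕ) => (⟨n - 1 - p.2, n - 1 - p.1⟩ : Σ _ : ℕ, ℕ)) ?_ ?_ ?_ ?_ ?_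
  · rintro ⟨a, c⟩ h
    simp only [Finset.mem_sigma, Finset.mem_range] at h ⊢
    omega
  · rintro ⟨a, c⟩ h
    simp only [Finset.mem_sigma, Finset.mem_range] at h ⊢
    omega
  · rintro ⟨a, c⟩ h
    simp only [Finset.mem_sigma, Finset.mem_range] at h
    have h1 : n - 1 - (n - 1 - a) = a := by omega
    have h2 : n - 1 - (n - 1 - c) = c := by omega
    simp [h1, h2]
  · rintro ⟨a, c⟩ h
    simp only [Finset.mem_sigma, Finset.mem_range] at h
    have h1 : n - 1 - (n - 1 - a) = a := by omega
    have h2 : n - 1 - (n - 1 - c) = c := by omega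
    simp [h1, h2]
  · rintro ⟨a, c⟩ h
    simp only [Finset.mem_sigma, Finset.mem_range] at h
    have h1 : n - 1 - (n - 1 - a) = a := by omega
    have h2 : n - 1 - (n - 1 - c) = c := by omega
    simp only [h1, h2]

section MirrorDuality

variable (X : Type*) [NormedAddCommGroup X] [NormedSpace ℝ X]

/-- Extension of a tuple indexed by `Fin (N+1)` to `ℕ` by zero; in particular
it implements the convention `A_{N+1} := 0`. -/
def extZ {α : Type*} [Zero α] (N : ℕ) (A : Fin (N + 1) → α) : ℕ → α :=
  fun i => if h : i < N + 1 then A ⟨i, h⟩ else 0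

/-- The auxiliary sequence `x_0 = B_0`, `x_{k+1} = x_k - ∑_{i=0}^{k+1} b_{k+1,i} B_i`
appearing in the definition of the primal residual functional `U`. -/
noncomputable def xAux (b : ℕ → ℕ → ℝ) (B : ℕ → X) : ℕ → X :=
  fun k => B 0 - ∑ j ∈ range k, ∑ i ∈ range (j + 2), b (j + 1) i • B i

/-- The primal residual functional
`U(A,B) = ∑_{k<N} (u_k/(2L))‖A_k-A_{k+1}‖_*² + ∑_{k<N} (σ/2)‖B_k-B_{k+1}‖²
 + ∑_{k<N} ⟨∑_{i≤k} a_{k+1,i}A_i, B_{k+1}⟩ - ∑_{k≤N} u_k ⟨A_k-A_{k+1}, x_k⟩`,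
with the convention `A_{N+1} = 0` (only values `A_0,…,A_N`, `B_0,…,B_N` are read). -/
noncomputable def primalU (N : ℕ) (L σ : ℝ) (u : ℕ → ℝ) (a b : ℕ → ℕ → ℝ)
    (A : ℕ → StrongDual ℝ X) (B : ℕ → X) : ℝ :=
  -- `A` with the convention `A_{N+1} := 0`
  let Az : ℕ → StrongDual ℝ X := fun i => if i ≤ N then A i else 0
  (∑ k ∈ range N, u k / (2 * L) * ‖A k - A (k + 1)‖ ^ 2)
    + (∑ k ∈ range N, σ / 2 * ‖B k - B (k + 1)‖ ^ 2)
    + (∑ k ∈ range N, (∑ i ∈ range (k + 1), a (k + 1) i • A i) (B (k + 1)))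
    - ∑ k ∈ range (N + 1), u k * (Az k - Az (k + 1)) (xAux X b B k)

/-- The dual residual functional
`V(C,D) = ∑_{k<N} (v_{k+1}/(2L))‖C_k-C_{k+1}‖_*² + ∑_{k<N} (σ/2)‖D_k-D_{k+1}‖²
 + ∑_{k≤N} ⟨∑_{i≤k} b_{N-i,N-k}C_i, D_k⟩
 + ∑_{k<N} ⟨v_{k+1}C_{k+1} - ∑_{j≤k}(v_{j+1}-v_j)C_j, ∑_{i≤k} a_{N-i,N-1-k}D_i⟩`. -/
noncomputable def dualV (N : ℕ) (L σ : ℝ) (v : ℕ → ℝ) (a b : ℕ → ℕ → ℝ)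
    (C : ℕ → StrongDual ℝ X) (D : ℕ → X) : ℝ :=
  (∑ k ∈ range N, v (k + 1) / (2 * L) * ‖C k - C (k + 1)‖ ^ 2)
    + (∑ k ∈ range N, σ / 2 * ‖D k - D (k + 1)‖ ^ 2)
    + (∑ k ∈ range (N + 1), (∑ i ∈ range (k + 1), b (N - i) (N - k) • C i) (D k))
    + ∑ k ∈ range N,
        (v (k + 1) • C (k + 1) - ∑ j ∈ range (k + 1), (v (j + 1) - v j) • C j)
          (∑ i ∈ range (k + 1), a (N - i) (N - 1 - k) • D i)


/-- The key identity underlying the Mirror Duality theorem: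
for any `A_0,…,A_N ∈ X*` and `B_0,…,B_N ∈ X`, if `C_0,…,C_N ∈ X*` and
`D_0,…,D_N ∈ X` are defined by `C_0 = u_N • A_N`,
`C_{N-i} - C_{N-i-1} = u_i • (A_i - A_{i+1})` for `i = 0,…,N-1`
(with the convention `A_{N+1} := 0`), and `D_i = B_{N-i}` for `i = 0,…,N`,
then `U(A_0,…,A_N,B_0,…,B_N) = V(C_0,…,C_N,D_0,…,D_N)`. -/
theorem mirror_duality_key_identity
    [CompleteSpace X] (hrefl : Function.Surjective (inclusionInDoubleDual ℝ X))
    (L σ : ℝ) (hL : 0 < L) (hσ : 0 < σ)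
    (N : ℕ) (hN : 1 ≤ N)
    (a b : ℕ → ℕ → ℝ) (hb00 : b 0 0 = -1)
    (u v : ℕ → ℝ)
    (hu_pos : ∀ i ≤ N, 0 < u i)
    (hu_mono : ∀ i, i < N → u i ≤ u (i + 1))
    (hv : ∀ i ≤ N, v i = 1 / u (N - i))
    (A C : ℕ → StrongDual ℝ X) (B D : ℕ → X)
    (hC0 : C 0 = u N • A N)
    (hCrec : ∀ i < N,
      C (N - i) - C (N - i - 1) =
        u i • (A i - (if i + 1 ≤ N then A (i + 1) else 0)))
    (hD : ∀ i ≤ N, D i = B (N - i)) :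
    primalU X N L σ u a b A B = dualV X N L σ v a b C D := by
  have hune : ∀ i, i ≤ N → u i ≠ 0 := fun i hi => ne_of_gt (hu_pos i hi)
  have hx0 : xAux X b B 0 = B 0 := by simp [xAux]
  have hxs : ∀ k, xAux X b B k - xAux X b B (k + 1)
      = ∑ i ∈ range (k + 2), b (k + 1) i • B i := by
    intro k
    simp only [xAux, Finset.sum_range_succ]
    abel
  have hC : ∀ k < N, C (k + 1) - C k = u (N - 1 - k) • (A (N - 1 - k) - A (N - k)) := by
    intro k hk
    have h := hCrec (N - 1 - k) (by omega)
    rw [if_pos (by omega)] at h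
    have e2 : N - (N - 1 - k) - 1 = k := by omega
    have e1 : N - (N - 1 - k) = k + 1 := by omega
    have e3 : N - 1 - k + 1 = N - k := by omega
    rw [e2, e1, e3] at h
    exact h
  have hE : ∀ k, k < N → v (k + 1) • C (k + 1)
      - ∑ j ∈ range (k + 1), (v (j + 1) - v j) • C j = A (N - 1 - k) := by
    intro k
    induction k with
    | zero =>
      intro hk
      have h1 := hC 0 hk
      simp only [Nat.sub_zero, zero_add, Finset.sum_range_one] at h1 ⊢
      have key : v 1 • C 1 - (v (0 + 1) - v 0) • C 0
          = v 1 • (C 1 - C 0) + v 0 • C 0 := by module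
      rw [key, h1, hC0, smul_smul, smul_smul, hv 1 (by omega), hv 0 (by omega)]
      simp only [Nat.sub_zero]
      rw [one_div_mul_cancel (hune (N - 1) (by omega)),
        one_div_mul_cancel (hune N le_rfl), one_smul, one_smul]
      abel
    | succ n ih =>
      intro hk
      have ihn := ih (by omega)
      rw [Finset.sum_range_succ]
      have key : v (n + 1 + 1) • C (n + 1 + 1) -
          ((∑ j ∈ range (n + 1), (v (j + 1) - v j) • C j)
            + (v (n + 1 + 1) - v (n + 1)) • C (n + 1))
          = (v (n + 1) • C (n + 1) - ∑ j ∈ range (n + 1), (v (j + 1) - v j) • C j)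
            + v (n + 1 + 1) • (C (n + 1 + 1) - C (n + 1)) := by module
      rw [key, ihn, hC (n + 1) hk, smul_smul]
      have hvn : v (n + 1 + 1) * u (N - 1 - (n + 1)) = 1 := by
        rw [hv (n + 1 + 1) (by omega)]
        have e : N - (n + 1 + 1) = N - 1 - (n + 1) := by omega
        rw [e]
        exact one_div_mul_cancel (hune _ (by omega))
      rw [hvn, one_smul]
      have e1 : N - (n + 1) = N - 1 - n := by omega
      rw [e1]
      abel
  have hT1 : (∑ k ∈ range N, v (k + 1) / (2 * L) * ‖C k - C (k + 1)‖ ^ 2)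
      = ∑ k ∈ range N, u k / (2 * L) * ‖A k - A (k + 1)‖ ^ 2 := by
    rw [← Finset.sum_range_reflect (fun k => u k / (2 * L) * ‖A k - A (k + 1)‖ ^ 2) N]
    refine Finset.sum_congr rfl fun k hk => ?_
    rw [Finset.mem_range] at hk
    have e3 : N - 1 - k + 1 = N - k := by omega
    rw [e3, norm_sub_rev, hC k hk, norm_smul, Real.norm_eq_abs,
      abs_of_pos (hu_pos _ (by omega)), hv (k + 1) (by omega)]
    have e4 : N - (k + 1) = N - 1 - k := by omega
    rw [e4]
    have h0 : u (N - 1 - k) ≠ 0 := hune _ (by omega)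
    field_simp
  have hT2 : (∑ k ∈ range N, σ / 2 * ‖D k - D (k + 1)‖ ^ 2)
      = ∑ k ∈ range N, σ / 2 * ‖B k - B (k + 1)‖ ^ 2 := by
    rw [← Finset.sum_range_reflect (fun k => σ / 2 * ‖B k - B (k + 1)‖ ^ 2) N]
    refine Finset.sum_congr rfl fun k hk => ?_
    rw [Finset.mem_range] at hk
    rw [hD k (by omega), hD (k + 1) (by omega), norm_sub_rev]
    have e1 : N - (k + 1) = N - 1 - k := by omega
    have e2 : N - 1 - k + 1 = N - k := by omega
    rw [e1, e2]
  have hT4 : (∑ k ∈ range N,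
        (v (k + 1) • C (k + 1) - ∑ j ∈ range (k + 1), (v (j + 1) - v j) • C j)
          (∑ i ∈ range (k + 1), a (N - i) (N - 1 - k) • D i))
      = ∑ k ∈ range N, (∑ i ∈ range (k + 1), a (k + 1) i • A i) (B (k + 1)) := by
    have lhs_eq : ∀ k ∈ range N,
        (v (k + 1) • C (k + 1) - ∑ j ∈ range (k + 1), (v (j + 1) - v j) • C j)
          (∑ i ∈ range (k + 1), a (N - i) (N - 1 - k) • D i)
        = ∑ i ∈ range (k + 1), a (N - i) (N - 1 - k) * (A (N - 1 - k)) (B (N - i)) := by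
      intro k hk
      rw [Finset.mem_range] at hk
      rw [hE k hk, map_sum]
      refine Finset.sum_congr rfl fun i hi => ?_
      rw [Finset.mem_range] at hi
      rw [hD i (by omega), map_smul, smul_eq_mul]
    have rhs_eq : ∀ k ∈ range N,
        (∑ i ∈ range (k + 1), a (k + 1) i • A i) (B (k + 1))
        = ∑ i ∈ range (k + 1), a (k + 1) i * (A i) (B (k + 1)) := by
      intro k _
      rw [ContinuousLinearMap.sum_apply]
      exact Finset.sum_congr rfl fun i _ => by
        rw [ContinuousLinearMap.smul_apply, smul_eq_mul]
    rw [Finset.sum_congr rfl lhs_eq, Finset.sum_congr rfl rhs_eq,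
      tri_reflect N (fun k i => a (k + 1) i * (A i) (B (k + 1)))]
    refine Finset.sum_congr rfl fun k hk => Finset.sum_congr rfl fun i hi => ?_
    rw [Finset.mem_range] at hk hi
    have e1 : N - 1 - i + 1 = N - i := by omega
    rw [e1]
  have hT3 : (∑ k ∈ range (N + 1), (∑ i ∈ range (k + 1), b (N - i) (N - k) • C i) (D k))
      = -(∑ k ∈ range (N + 1), u k *
          ((if k ≤ N then A k else 0) - (if k + 1 ≤ N then A (k + 1) else 0)) (xAux X b B k)) := by
    have e1 : ∀ k ∈ range (N + 1),
        (∑ i ∈ range (k + 1), b (N - i) (N - k) • C i) (D k)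
          = ∑ i ∈ range (k + 1), b (N - i) (N - k) * (C i) (B (N - k)) := by
      intro k hk
      rw [Finset.mem_range] at hk
      rw [hD k (by omega), ContinuousLinearMap.sum_apply]
      exact Finset.sum_congr rfl fun i _ => by
        rw [ContinuousLinearMap.smul_apply, smul_eq_mul]
    rw [Finset.sum_congr rfl e1,
      tri_reflect (N + 1) (fun k i => b (N - i) (N - k) * (C i) (B (N - k)))]
    have e2 : ∀ k ∈ range (N + 1),
        (∑ i ∈ range (k + 1),
          b (N - (N + 1 - 1 - k)) (N - (N + 1 - 1 - i)) *
            (C (N + 1 - 1 - k)) (B (N - (N + 1 - 1 - i))))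
        = (C (N - k)) (∑ i ∈ range (k + 1), b k i • B i) := by
      intro k hk
      rw [Finset.mem_range] at hk
      rw [map_sum]
      refine Finset.sum_congr rfl fun i hi => ?_
      rw [Finset.mem_range] at hi
      have f1 : N - (N + 1 - 1 - k) = k := by omega
      have f2 : N - (N + 1 - 1 - i) = i := by omega
      have f3 : N + 1 - 1 - k = N - k := by omega
      rw [f1, f2, f3, map_smul, smul_eq_mul]
    rw [Finset.sum_congr rfl e2]
    have key : ∀ n, n ≤ N →
        (∑ k ∈ range (n + 1), (C (N - k)) (∑ i ∈ range (k + 1), b k i • B i))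
        = -(∑ k ∈ range n, u k * (A k - A (k + 1)) (xAux X b B k))
            - (C (N - n)) (xAux X b B n) := by
      intro n
      induction n with
      | zero =>
        intro _
        simp only [zero_add, Finset.sum_range_one, Finset.sum_range_zero, Nat.sub_zero,
          hb00, hx0, neg_zero, zero_sub, map_smul]
        simp
      | succ n ih =>
        intro hn
        rw [Finset.sum_range_succ, ih (by omega)]
        have hy : (∑ i ∈ range (n + 1 + 1), b (n + 1) i • B i)
            = xAux X b B n - xAux X b B (n + 1) := by
          rw [show n + 1 + 1 = n + 2 from rfl]
          exact (hxs n).symm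
        rw [hy, map_sub, Finset.sum_range_succ]
        have hCd := hCrec n (by omega)
        rw [if_pos (by omega)] at hCd
        have h2 : (C (N - n)) (xAux X b B n) - (C (N - n - 1)) (xAux X b B n)
            = u n * (A n - A (n + 1)) (xAux X b B n) := by
          rw [← ContinuousLinearMap.sub_apply, hCd, ContinuousLinearMap.smul_apply, smul_eq_mul]
        have h3 : N - (n + 1) = N - n - 1 := by omega
        rw [h3]
        linarith
    rw [key N le_rfl]
    have e4 : (∑ k ∈ range N, u k *
          ((if k ≤ N then A k else 0) - (if k + 1 ≤ N then A (k + 1) else 0)) (xAux X b B k))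
        = ∑ k ∈ range N, u k * (A k - A (k + 1)) (xAux X b B k) := by
      refine Finset.sum_congr rfl fun k hk => ?_
      rw [Finset.mem_range] at hk
      rw [if_pos (by omega : k ≤ N), if_pos (by omega : k + 1 ≤ N)]
    rw [Finset.sum_range_succ, e4, if_pos (le_refl N), if_neg (by omega : ¬ N + 1 ≤ N)]
    have e5 : N - N = 0 := by omega
    rw [e5, hC0, sub_zero, ContinuousLinearMap.smul_apply, smul_eq_mul]
    ring
  simp only [primalU, dualV]
  rw [hT1, hT2, hT3, hT4]
  ring

end MirrorDuality
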